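/- Let B^*, B^0, …, B^{d−1} be a maximal family of d+1 mutually unbiased orthonormal bases of ℂ^d, where B^* = (e_m) is the standard basis and B^i = (b^i_j)_{j=0}^{d−1}. For each i let H^i be a d×d complex Hadamard matrix whose 0-th column has all entries equal to 1, and let G be a d×d complex Hadamard matrix whose 0-th row and 0-th column have all entries equal to 1. Define, for i ∈ {0,…,d−1} and k ∈ {1,…,d−1}, the operator U_{ik} = Σ_j H^i_{jk} |b^i_j⟩⟨b^i_j|, and for a ∈ {0,…,d−1} the diagonal operator D_a = Σ_m G_{ma} |e_m⟩⟨e_m|. Then the d² operators {D_a : a ∈ {0,…,d−1}} ∪ {U_{ik} : i ∈ {0,…,d−1}, k ∈ {1,…,d−1}} form a unitary error basis on ℂ^d containing the identity D_0 = I. -/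

import Mathlib

noncomputable section

/-- The rank-one projection `|v⟩⟨v|` as a matrix. -/
def rankOneProj (d : ℕ) (v : EuclideanSpace ℂ (Fin d)) : Matrix (Fin d) (Fin d) ℂ :=
  Matrix.of fun m n => v m * (starRingEnd ℂ) (v n)

/-- The operator `U i k = Σ_j H i j k • |b i j⟩⟨b i j|`. -/
def mubUEBOp (d : ℕ) (b : Fin d → Fin d → EuclideanSpace ℂ (Fin d))
    (H : Fin d → Matrix (Fin d) (Fin d) ℂ) (i k : Fin d) : Matrix (Fin d) (Fin d) ℂ :=
  ∑ j, (H i) j k • rankOneProj d (b i j)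

/-- The diagonal operator `D a = Σ_m G m a • |e m⟩⟨e m|`. -/
def mubDiagOp (d : ℕ) (G : Matrix (Fin d) (Fin d) ℂ) (a : Fin d) :
    Matrix (Fin d) (Fin d) ℂ :=
  Matrix.diagonal fun m => G m a

/-- The combined family: for `k = 0` the diagonal operator `D i`, for `k ≠ 0` the
operator `U i k`. -/
def mubUEBFamily (d : ℕ) (hd : 0 < d) (b : Fin d → Fin d → EuclideanSpace ℂ (Fin d))
    (H : Fin d → Matrix (Fin d) (Fin d) ℂ) (G : Matrix (Fin d) (Fin d) ℂ)
    (i k : Fin d) : Matrix (Fin d) (Fin d) ℂ :=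
  if k = ⟨0, hd⟩ then mubDiagOp d G i else mubUEBOp d b H i k

/- ========================= auxiliary lemmas ========================= -/

open Matrix in
lemma myaux_rankOneProj_conjTranspose (d : ℕ) (v : EuclideanSpace ℂ (Fin d)) :
    (rankOneProj d v)ᴴ = rankOneProj d v := by
  ext m n
  simp [rankOneProj, Matrix.conjTranspose_apply, mul_comm]

open Matrix in
lemma myaux_trace_rankOneProj_mul (d : ℕ) (v w : EuclideanSpace ℂ (Fin d)) :
    (rankOneProj d v * rankOneProj d w).trace
      = (∑ p, (starRingEnd ℂ) (v p) * w p) * (∑ q, (starRingEnd ℂ) (w q) * v q) := by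
  simp only [Matrix.trace, Matrix.diag_apply, Matrix.mul_apply, rankOneProj, Matrix.of_apply,
    Finset.sum_mul_sum]
  rw [Finset.sum_comm]
  exact Finset.sum_congr rfl fun p _ => Finset.sum_congr rfl fun m _ => by ring

lemma myaux_mul_conj (z : ℂ) (r : ℝ) (h : ‖z‖ ^ 2 = r) :
    z * (starRingEnd ℂ) z = (r : ℂ) := by
  rw [Complex.mul_conj, ← h]
  simp [Complex.normSq_eq_norm_sq]

/-- the matrix whose columns are the basis vectors -/
def myaux_basisMatrix (d : ℕ) (B : OrthonormalBasis (Fin d) ℂ (EuclideanSpace ℂ (Fin d))) :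
    Matrix (Fin d) (Fin d) ℂ :=
  Matrix.of fun m j => B j m

open Matrix in
lemma myaux_inner_coord (d : ℕ) (x y : EuclideanSpace ℂ (Fin d)) :
    (inner ℂ x y : ℂ) = ∑ m, (starRingEnd ℂ) (x m) * y m := by
  simp [PiLp.inner_apply, RCLike.inner_apply]
  exact Finset.sum_congr rfl fun _ _ => mul_comm _ _

open Matrix in
lemma myaux_ortho (d : ℕ) (B : OrthonormalBasis (Fin d) ℂ (EuclideanSpace ℂ (Fin d)))
    (j j' : Fin d) :
    ∑ m, (starRingEnd ℂ) (B j m) * B j' m = if j = j' then 1 else 0 := by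
  rw [← myaux_inner_coord]
  exact orthonormal_iff_ite.mp B.orthonormal j j'

open Matrix in
lemma myaux_basisMatrix_unitary (d : ℕ)
    (B : OrthonormalBasis (Fin d) ℂ (EuclideanSpace ℂ (Fin d))) :
    (myaux_basisMatrix d B)ᴴ * myaux_basisMatrix d B = 1 := by
  ext j j'
  simp only [Matrix.mul_apply, Matrix.conjTranspose_apply, myaux_basisMatrix, Matrix.of_apply,
    Matrix.one_apply]
  exact myaux_ortho d B j j'

open Matrix in
lemma myaux_basisMatrix_unitary' (d : ℕ)
    (B : OrthonormalBasis (Fin d) ℂ (EuclideanSpace ℂ (Fin d))) :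
    myaux_basisMatrix d B * (myaux_basisMatrix d B)ᴴ = 1 :=
  mul_eq_one_comm.mp (myaux_basisMatrix_unitary d B)

open Matrix in
lemma myaux_complete (d : ℕ) (B : OrthonormalBasis (Fin d) ℂ (EuclideanSpace ℂ (Fin d)))
    (m n : Fin d) :
    ∑ j, B j m * (starRingEnd ℂ) (B j n) = if m = n then 1 else 0 := by
  have h := myaux_basisMatrix_unitary' d B
  have h2 := congrFun (congrFun h m) n
  simpa [Matrix.mul_apply, Matrix.conjTranspose_apply, myaux_basisMatrix, Matrix.one_apply]
    using h2

open Matrix in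
lemma myaux_op_factor (d : ℕ) (B : Fin d → OrthonormalBasis (Fin d) ℂ (EuclideanSpace ℂ (Fin d)))
    (H : Fin d → Matrix (Fin d) (Fin d) ℂ) (i k : Fin d) :
    mubUEBOp d (fun i j => B i j) H i k
      = myaux_basisMatrix d (B i) * Matrix.diagonal (fun j => H i j k)
          * (myaux_basisMatrix d (B i))ᴴ := by
  ext m n
  rw [Matrix.mul_assoc]
  simp only [mubUEBOp, Matrix.sum_apply, Matrix.smul_apply, rankOneProj, Matrix.of_apply,
    smul_eq_mul, Matrix.mul_apply, Matrix.diagonal_apply, Matrix.conjTranspose_apply,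
    myaux_basisMatrix, Complex.star_def, ite_mul, zero_mul, Finset.sum_ite_eq,
    Finset.mem_univ, if_true]
  exact Finset.sum_congr rfl fun j _ => by ring

open Matrix in
lemma myaux_trace_UU (d : ℕ) (B : Fin d → OrthonormalBasis (Fin d) ℂ (EuclideanSpace ℂ (Fin d)))
    (H : Fin d → Matrix (Fin d) (Fin d) ℂ) (i k m n : Fin d) :
    ((mubUEBOp d (fun i j => B i j) H i k)ᴴ * mubUEBOp d (fun i j => B i j) H m n).trace
      = ∑ j, ∑ j', ((starRingEnd ℂ) (H i j k) * H m j' n) *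
          ((∑ p, (starRingEnd ℂ) (B i j p) * B m j' p)
            * (∑ q, (starRingEnd ℂ) (B m j' q) * B i j q)) := by
  simp only [mubUEBOp, Matrix.conjTranspose_sum, Matrix.conjTranspose_smul,
    myaux_rankOneProj_conjTranspose, Finset.sum_mul, Finset.mul_sum, smul_mul_assoc,
    mul_smul_comm, Matrix.trace_sum, Matrix.trace_smul, smul_smul, smul_eq_mul,
    myaux_trace_rankOneProj_mul, Complex.star_def]
  rw [Finset.sum_comm]
  exact Finset.sum_congr rfl fun j _ => Finset.sum_congr rfl fun j' _ =>
    Finset.sum_congr rfl fun p _ => Finset.sum_congr rfl fun q _ => by ring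

/- ========================= main theorem ========================= -/

open Matrix

theorem mub_gives_partitioned_ueb (d : ℕ) (hd : 0 < d)
    (B : Fin d → OrthonormalBasis (Fin d) ℂ (EuclideanSpace ℂ (Fin d)))
    (hstarMUB : ∀ i m j,
      ‖(inner ℂ (EuclideanSpace.single m (1 : ℂ)) (B i j) : ℂ)‖ ^ 2 = 1 / (d : ℝ))
    (hMUB : ∀ i m, i ≠ m → ∀ j k,
      ‖(inner ℂ (B i j) (B m k) : ℂ)‖ ^ 2 = 1 / (d : ℝ))
    (H : Fin d → Matrix (Fin d) (Fin d) ℂ)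
    (hHmod : ∀ i j k, ‖(H i) j k‖ = 1)
    (hHunit : ∀ i, H i * (H i).conjTranspose = (d : ℂ) • 1)
    (hHunit' : ∀ i, (H i).conjTranspose * H i = (d : ℂ) • 1)
    (hHcol : ∀ i j, (H i) j ⟨0, hd⟩ = 1)
    (G : Matrix (Fin d) (Fin d) ℂ)
    (hGmod : ∀ m a, ‖G m a‖ = 1)
    (hGunit : G * G.conjTranspose = (d : ℂ) • 1)
    (hGunit' : G.conjTranspose * G = (d : ℂ) • 1)
    (hGrow : ∀ a, G ⟨0, hd⟩ a = 1)
    (hGcol : ∀ m, G m ⟨0, hd⟩ = 1) :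
    mubUEBFamily d hd (fun i j => B i j) H G ⟨0, hd⟩ ⟨0, hd⟩ = 1 ∧
    (∀ i k, mubUEBFamily d hd (fun i j => B i j) H G i k ∈ Matrix.unitaryGroup (Fin d) ℂ) ∧
    ∀ i k m n,
      Matrix.trace ((mubUEBFamily d hd (fun i j => B i j) H G i k).conjTranspose *
          mubUEBFamily d hd (fun i j => B i j) H G m n)
        = if i = m ∧ k = n then (d : ℂ) else 0 := by
  set z : Fin d := ⟨0, hd⟩ with hz
  -- entrywise orthogonality of columns of H
  have hHorth : ∀ i k n, ∑ j, (starRingEnd ℂ) (H i j k) * H i j n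
      = if k = n then (d : ℂ) else 0 := by
    intro i k n
    have h := congrFun (congrFun (hHunit' i) k) n
    simpa [Matrix.mul_apply, Matrix.conjTranspose_apply, Matrix.smul_apply, Matrix.one_apply,
      mul_ite] using h
  have hGorth : ∀ a b', ∑ m, (starRingEnd ℂ) (G m a) * G m b'
      = if a = b' then (d : ℂ) else 0 := by
    intro a b'
    have h := congrFun (congrFun hGunit' a) b'
    simpa [Matrix.mul_apply, Matrix.conjTranspose_apply, Matrix.smul_apply, Matrix.one_apply,
      mul_ite] using h
  -- column sums of H
  have hHcolsum : ∀ i k, k ≠ z → ∑ j, H i j k = 0 := by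
    intro i k hk
    have h := hHorth i z k
    simp only [hHcol, _root_.map_one, one_mul] at h
    rw [h, if_neg fun hzk => hk hzk.symm]
  -- squared modulus facts
  have hHnormsq : ∀ i j k, H i j k * (starRingEnd ℂ) (H i j k) = 1 := by
    intro i j k
    have := myaux_mul_conj (H i j k) 1 (by rw [hHmod]; norm_num)
    simpa using this
  have hGnormsq : ∀ m a, G m a * (starRingEnd ℂ) (G m a) = 1 := by
    intro m a
    have := myaux_mul_conj (G m a) 1 (by rw [hGmod]; norm_num)
    simpa using this
  have hBnormsq : ∀ i j m, B i j m * (starRingEnd ℂ) (B i j m) = ((d : ℂ))⁻¹ := by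
    intro i j m
    have h := hstarMUB i m j
    rw [EuclideanSpace.inner_single_left] at h
    simp only [_root_.map_one, one_mul] at h
    have := myaux_mul_conj (B i j m) (1 / (d : ℝ)) h
    rw [this]
    push_cast
    ring
  -- cross-basis inner product squared modulus
  have hcross : ∀ i m, i ≠ m → ∀ j j',
      (∑ p, (starRingEnd ℂ) (B i j p) * B m j' p)
        * (∑ q, (starRingEnd ℂ) (B m j' q) * B i j q) = ((d : ℂ))⁻¹ := by
    intro i m him j j'
    have h1 : (∑ p, (starRingEnd ℂ) (B i j p) * B m j' p) = (inner ℂ (B i j) (B m j') : ℂ) :=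
      (myaux_inner_coord d _ _).symm
    have h2 : (∑ q, (starRingEnd ℂ) (B m j' q) * B i j q) = (inner ℂ (B m j') (B i j) : ℂ) :=
      (myaux_inner_coord d _ _).symm
    have h3 := myaux_mul_conj (inner ℂ (B m j') (B i j) : ℂ) (1 / (d : ℝ))
      (hMUB m i (Ne.symm him) j' j)
    have h4 : (inner ℂ (B i j) (B m j') : ℂ) = (starRingEnd ℂ) (inner ℂ (B m j') (B i j) : ℂ) :=
      (inner_conj_symm _ _).symm
    rw [h1, h2, h4, mul_comm, h3]
    push_cast
    ring
  -- diagonal entries of U vanish for k ≠ 0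
  have hUdiag : ∀ i k, k ≠ z → ∀ m, mubUEBOp d (fun i j => B i j) H i k m m = 0 := by
    intro i k hk m
    simp only [mubUEBOp, Matrix.sum_apply, Matrix.smul_apply, rankOneProj, Matrix.of_apply,
      smul_eq_mul]
    have : ∀ j, H i j k * (B i j m * (starRingEnd ℂ) (B i j m)) = H i j k * ((d : ℂ))⁻¹ := by
      intro j; rw [hBnormsq]
    rw [Finset.sum_congr rfl fun j _ => this j, ← Finset.sum_mul, hHcolsum i k hk, zero_mul]
  refine ⟨?_, ?_, ?_⟩
  · -- identity
    simp only [mubUEBFamily, if_pos rfl, mubDiagOp]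
    rw [show (fun m => G m z) = fun _ => (1 : ℂ) from funext hGcol]
    exact Matrix.diagonal_one
  · -- unitarity
    intro i k
    rw [Matrix.mem_unitaryGroup_iff]
    by_cases hk : k = z
    · simp only [mubUEBFamily, ← hz, if_pos hk, mubDiagOp, Matrix.star_eq_conjTranspose,
        Matrix.diagonal_conjTranspose, Matrix.diagonal_mul_diagonal]
      ext p q
      by_cases hpq : p = q
      · subst hpq
        simp [Matrix.diagonal_apply_eq, Matrix.one_apply, Complex.star_def, hGnormsq p i]
      · simp [Matrix.diagonal_apply_ne _ hpq, Matrix.one_apply, hpq]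
    · simp only [mubUEBFamily, ← hz, if_neg hk]
      rw [myaux_op_factor d B H i k]
      set M := myaux_basisMatrix d (B i)
      set D := Matrix.diagonal (fun j => H i j k)
      have hM1 : Mᴴ * M = 1 := myaux_basisMatrix_unitary d (B i)
      have hM2 : M * Mᴴ = 1 := myaux_basisMatrix_unitary' d (B i)
      have hDD : D * Dᴴ = 1 := by
        simp only [D, Matrix.diagonal_conjTranspose, Matrix.diagonal_mul_diagonal]
        ext p q
        by_cases hpq : p = q
        · subst hpq
          simp [Matrix.diagonal_apply_eq, Matrix.one_apply, Complex.star_def, hHnormsq i p k]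
        · simp [Matrix.diagonal_apply_ne _ hpq, Matrix.one_apply, hpq]
      rw [Matrix.star_eq_conjTranspose]
      simp only [Matrix.conjTranspose_mul, Matrix.conjTranspose_conjTranspose]
      simp only [Matrix.mul_assoc]
      rw [← Matrix.mul_assoc Mᴴ M, hM1, Matrix.one_mul, ← Matrix.mul_assoc D Dᴴ, hDD,
        Matrix.one_mul, hM2]
  · -- trace orthogonality
    intro i k m n
    by_cases hk : k = z <;> by_cases hn : n = z
    · -- both diagonal
      subst hk; subst hn
      simp only [mubUEBFamily, ← hz, if_pos rfl, if_true, eq_self_iff_true, and_true, mubDiagOp,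
        Matrix.diagonal_conjTranspose, Matrix.diagonal_mul_diagonal]
      rw [Matrix.trace_diagonal]
      have h := hGorth i m
      simp only [Pi.mul_apply, Pi.star_apply, Complex.star_def]
      rw [h]
    · -- D† U
      subst hk
      simp only [mubUEBFamily, ← hz, if_pos rfl, if_true, eq_self_iff_true, if_neg hn, mubDiagOp,
        Matrix.diagonal_conjTranspose]
      rw [if_neg (show ¬(i = m ∧ z = n) from fun hc => hn hc.2.symm)]
      simp only [Matrix.trace, Matrix.diag_apply]
      refine Finset.sum_eq_zero fun p _ => ?_
      rw [Matrix.diagonal_mul, hUdiag m n hn p, mul_zero]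
    · -- U† D
      subst hn
      simp only [mubUEBFamily, ← hz, if_pos rfl, if_true, eq_self_iff_true, if_neg hk, mubDiagOp]
      rw [if_neg (show ¬(i = m ∧ k = z) from fun hc => hk hc.2)]
      simp only [Matrix.trace, Matrix.diag_apply]
      refine Finset.sum_eq_zero fun p _ => ?_
      rw [Matrix.mul_diagonal, Matrix.conjTranspose_apply, hUdiag i k hk p, star_zero,
        zero_mul]
    · -- U† U
      simp only [mubUEBFamily, ← hz, if_neg hk, if_neg hn]
      rw [myaux_trace_UU d B H i k m n]
      by_cases him : i = m
      · subst him
        have hterm : ∀ j j', ((starRingEnd ℂ) (H i j k) * H i j' n) *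
            ((∑ p, (starRingEnd ℂ) (B i j p) * B i j' p)
              * (∑ q, (starRingEnd ℂ) (B i j' q) * B i j q))
            = if j = j' then (starRingEnd ℂ) (H i j k) * H i j' n else 0 := by
          intro j j'
          rw [myaux_ortho d (B i) j j', myaux_ortho d (B i) j' j]
          by_cases hjj : j = j'
          · subst hjj; simp
          · rw [if_neg hjj, if_neg (Ne.symm hjj), if_neg hjj]; ring
        rw [Finset.sum_congr rfl fun j _ => Finset.sum_congr rfl fun j' _ => hterm j j']
        have hcollapse : ∀ j : Fin d,
            (∑ j', if j = j' then (starRingEnd ℂ) (H i j k) * H i j' n else 0)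
              = (starRingEnd ℂ) (H i j k) * H i j n := by
          intro j
          simp
        rw [Finset.sum_congr rfl fun j _ => hcollapse j, hHorth i k n]
        by_cases hkn : k = n <;> simp [hkn]
      · rw [if_neg (show ¬(i = m ∧ k = n) from fun hc => him hc.1)]
        refine Finset.sum_eq_zero fun j _ => ?_
        have hterm : ∀ j', ((starRingEnd ℂ) (H i j k) * H m j' n) *
            ((∑ p, (starRingEnd ℂ) (B i j p) * B m j' p)
              * (∑ q, (starRingEnd ℂ) (B m j' q) * B i j q))
            = H m j' n * ((starRingEnd ℂ) (H i j k) * ((d : ℂ))⁻¹) := by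
          intro j'
          rw [hcross i m him j j']
          ring
        rw [Finset.sum_congr rfl fun j' _ => hterm j', ← Finset.sum_mul, hHcolsum m n hn,
          zero_mul]

end
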